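/- Integral estimate along the second characteristic (Lemma A.3, case i = 2): For every integer n ≥ 1 and every (x,ξ) ∈ T, setting z := φ₃⁻¹(φ₁(x) + φ₂(ξ)) and s₂^F := φ₁(x) − φ₁(z), one has ∫₀^{s₂^F} [ φ₁⁻¹( φ₁(z) + s ) ]ⁿ ds ≤ K_ε x^{n+1}/(n+1), where K_ε := max_{x∈[0,1]} max{ 1/ε₁(x), 1/ε₂(x) }. -/
import Mathlib

open MeasureTheory Set

/-- `φ(ε)(x) = ∫₀ˣ dz/ε(z)`. -/
noncomputable def phiInt (ε : ℝ → ℝ) (x : ℝ) : ℝ := ∫ z in (0:ℝ)..x, 1 / ε z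

section Aux

variable {ε : ℝ → ℝ}

lemma contOn_inv (hε : ContinuousOn ε (Icc 0 1)) (hpos : ∀ x ∈ Icc (0:ℝ) 1, 0 < ε x) :
    ContinuousOn (fun z => 1 / ε z) (Icc 0 1) :=
  continuousOn_const.div hε (fun x hx => (hpos x hx).ne')

lemma intble_inv (hε : ContinuousOn ε (Icc 0 1)) (hpos : ∀ x ∈ Icc (0:ℝ) 1, 0 < ε x)
    {u v : ℝ} (hu : u ∈ Icc (0:ℝ) 1) (hv : v ∈ Icc (0:ℝ) 1) :
    IntervalIntegrable (fun z => 1 / ε z) volume u v := by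
  apply ((contOn_inv hε hpos).mono ?_).intervalIntegrable
  exact uIcc_subset_Icc hu hv

lemma phiInt_zero : phiInt ε 0 = 0 := by
  simp [phiInt]

lemma phiInt_sub (hε : ContinuousOn ε (Icc 0 1)) (hpos : ∀ x ∈ Icc (0:ℝ) 1, 0 < ε x)
    {u v : ℝ} (hu : u ∈ Icc (0:ℝ) 1) (hv : v ∈ Icc (0:ℝ) 1) :
    phiInt ε v - phiInt ε u = ∫ z in u..v, 1 / ε z := by
  have h0 : (0:ℝ) ∈ Icc (0:ℝ) 1 := by constructor <;> norm_num
  have := intervalIntegral.integral_add_adjacent_intervals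
    (intble_inv hε hpos h0 hu) (intble_inv hε hpos hu hv)
  simp only [phiInt]
  linarith [this]

lemma phiInt_mono (hε : ContinuousOn ε (Icc 0 1)) (hpos : ∀ x ∈ Icc (0:ℝ) 1, 0 < ε x)
    {u v : ℝ} (hu : u ∈ Icc (0:ℝ) 1) (hv : v ∈ Icc (0:ℝ) 1) (huv : u ≤ v) :
    phiInt ε u ≤ phiInt ε v := by
  have h := phiInt_sub hε hpos hu hv
  have hnn : (0:ℝ) ≤ ∫ z in u..v, 1 / ε z := by
    refine intervalIntegral.integral_nonneg huv (fun t ht => ?_)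
    have htm : t ∈ Icc (0:ℝ) 1 := ⟨le_trans hu.1 ht.1, le_trans ht.2 hv.2⟩
    exact one_div_nonneg.2 (hpos t htm).le
  linarith

lemma phiInt_strictMono (hε : ContinuousOn ε (Icc 0 1)) (hpos : ∀ x ∈ Icc (0:ℝ) 1, 0 < ε x)
    {u v : ℝ} (hu : u ∈ Icc (0:ℝ) 1) (hv : v ∈ Icc (0:ℝ) 1) (huv : u < v) :
    phiInt ε u < phiInt ε v := by
  have h := phiInt_sub hε hpos hu hv
  have hpos' : (0:ℝ) < ∫ z in u..v, 1 / ε z := by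
    refine intervalIntegral.intervalIntegral_pos_of_pos_on (intble_inv hε hpos hu hv)
      (fun t ht => ?_) huv
    have htm : t ∈ Icc (0:ℝ) 1 := ⟨le_trans hu.1 ht.1.le, le_trans ht.2.le hv.2⟩
    exact one_div_pos.2 (hpos t htm)
  linarith

lemma phiInt_nonneg (hε : ContinuousOn ε (Icc 0 1)) (hpos : ∀ x ∈ Icc (0:ℝ) 1, 0 < ε x)
    {u : ℝ} (hu : u ∈ Icc (0:ℝ) 1) : 0 ≤ phiInt ε u := by
  have h0 : (0:ℝ) ∈ Icc (0:ℝ) 1 := by constructor <;> norm_num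
  have := phiInt_mono hε hpos h0 hu hu.1
  simpa [phiInt_zero] using this

/-- continuity of the primitive on `Icc 0 1` -/
lemma phiInt_contOn (hε : ContinuousOn ε (Icc 0 1)) (hpos : ∀ x ∈ Icc (0:ℝ) 1, 0 < ε x) :
    ContinuousOn (phiInt ε) (Icc 0 1) := by
  have h01 : (0:ℝ) ≤ 1 := by norm_num
  have := intervalIntegral.continuousOn_primitive_interval'
    (μ := volume) (f := fun z => 1 / ε z) (b₁ := (0:ℝ)) (b₂ := 1)
    (intble_inv hε hpos (by constructor <;> norm_num) (by constructor <;> norm_num))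
    (by rw [uIcc_of_le h01]; exact ⟨le_refl 0, h01⟩)
  rwa [uIcc_of_le h01] at this

/-- Strict monotonicity of the left inverse ψ. -/
lemma psi_strictMonoOn (hε : ContinuousOn ε (Icc 0 1)) (hpos : ∀ x ∈ Icc (0:ℝ) 1, 0 < ε x)
    {ψ : ℝ → ℝ}
    (hψ' : ∀ s ∈ Icc (0:ℝ) (phiInt ε 1), ψ s ∈ Icc (0:ℝ) 1 ∧ phiInt ε (ψ s) = s) :
    StrictMonoOn ψ (Icc 0 (phiInt ε 1)) := by
  intro s hs t ht hst
  by_contra hle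
  push_neg at hle
  have h1 := hψ' s hs
  have h2 := hψ' t ht
  have := phiInt_mono hε hpos h2.1 h1.1 hle
  rw [h1.2, h2.2] at this
  linarith

/-- Continuity of the left inverse ψ on `Icc 0 (phiInt ε 1)`. -/
lemma psi_contOn (hε : ContinuousOn ε (Icc 0 1)) (hpos : ∀ x ∈ Icc (0:ℝ) 1, 0 < ε x)
    {ψ : ℝ → ℝ}
    (hψ : ∀ x ∈ Icc (0:ℝ) 1, ψ (phiInt ε x) = x)
    (hψ' : ∀ s ∈ Icc (0:ℝ) (phiInt ε 1), ψ s ∈ Icc (0:ℝ) 1 ∧ phiInt ε (ψ s) = s) :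
    ContinuousOn ψ (Icc 0 (phiInt ε 1)) := by
  set B := phiInt ε 1 with hB
  have h0 : (0:ℝ) ∈ Icc (0:ℝ) 1 := by constructor <;> norm_num
  have h1 : (1:ℝ) ∈ Icc (0:ℝ) 1 := by constructor <;> norm_num
  have hB0 : 0 ≤ B := phiInt_nonneg hε hpos h1
  have hmono := psi_strictMonoOn hε hpos hψ'
  have hψ0 : ψ 0 = 0 := by
    have := hψ 0 h0; rwa [phiInt_zero] at this
  have hψB : ψ B = 1 := hψ 1 h1
  intro a ha
  -- left and right within-continuity
  have left : ContinuousWithinAt ψ (Icc 0 B ∩ Iic a) a := by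
    rcases eq_or_lt_of_le ha.1 with h0a | h0a
    · have : Icc (0:ℝ) B ∩ Iic a = {a} := by
        apply Subset.antisymm
        · intro t ht
          have : t = a := le_antisymm ht.2 (h0a ▸ ht.1.1)
          simp [this]
        · intro t ht
          simp only [mem_singleton_iff] at ht
          exact ⟨ht ▸ ha, ht.le⟩
      rw [this]
      exact continuousWithinAt_singleton
    · have hmem : Icc (0:ℝ) B ∈ nhdsWithin a (Iic a) := by
        rw [mem_nhdsWithin]
        refine ⟨Ioi 0, isOpen_Ioi, h0a, ?_⟩
        rintro t ⟨ht1, ht2⟩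
        exact ⟨le_of_lt ht1, le_trans ht2 ha.2⟩
      have hψa0 : 0 < ψ a := by
        have := hmono ⟨le_refl 0, hB0⟩ ha h0a
        rwa [hψ0] at this
      have hcw : ContinuousWithinAt ψ (Iic a) a := by
        apply StrictMonoOn.continuousWithinAt_left_of_exists_between hmono hmem
        intro b hb
        refine ⟨phiInt ε (max b 0), ?_, ?_⟩
        · have hmb : max b 0 ∈ Icc (0:ℝ) 1 := by
            constructor
            · exact le_max_right _ _
            · rcases max_cases b 0 with ⟨h, _⟩ | ⟨h, _⟩
              · rw [h]; exact le_trans hb.le (hψ' a ha).1.2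
              · rw [h]; norm_num
          exact ⟨phiInt_nonneg hε hpos hmb, phiInt_mono hε hpos hmb h1 hmb.2⟩
        · have hmb : max b 0 ∈ Icc (0:ℝ) 1 := by
            constructor
            · exact le_max_right _ _
            · rcases max_cases b 0 with ⟨h, _⟩ | ⟨h, _⟩
              · rw [h]; exact le_trans hb.le (hψ' a ha).1.2
              · rw [h]; norm_num
          rw [hψ _ hmb]
          constructor
          · exact le_max_left _ _
          · exact max_lt hb hψa0
      exact hcw.mono inter_subset_right
  have right : ContinuousWithinAt ψ (Icc 0 B ∩ Ici a) a := by
    rcases eq_or_lt_of_le ha.2 with haB | haB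
    · have : Icc (0:ℝ) B ∩ Ici a = {a} := by
        apply Subset.antisymm
        · intro t ht
          have : t = a := le_antisymm (haB ▸ ht.1.2) ht.2
          simp [this]
        · intro t ht
          simp only [mem_singleton_iff] at ht
          exact ⟨ht ▸ ha, ht.ge⟩
      rw [this]
      exact continuousWithinAt_singleton
    · have hmem : Icc (0:ℝ) B ∈ nhdsWithin a (Ici a) := by
        rw [mem_nhdsWithin]
        refine ⟨Iio B, isOpen_Iio, haB, ?_⟩
        rintro t ⟨ht1, ht2⟩
        exact ⟨le_trans ha.1 ht2, le_of_lt ht1⟩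
      have hψa1 : ψ a < 1 := by
        have := hmono ha ⟨hB0, le_refl B⟩ haB
        rwa [hψB] at this
      have hcw : ContinuousWithinAt ψ (Ici a) a := by
        apply StrictMonoOn.continuousWithinAt_right_of_exists_between hmono hmem
        intro b hb
        refine ⟨phiInt ε (min b 1), ?_, ?_⟩
        · have hmb : min b 1 ∈ Icc (0:ℝ) 1 := by
            constructor
            · rcases min_cases b 1 with ⟨h, _⟩ | ⟨h, _⟩
              · rw [h]; exact le_trans (hψ' a ha).1.1 hb.le
              · rw [h]; norm_num
            · exact min_le_right _ _
          exact ⟨phiInt_nonneg hε hpos hmb, phiInt_mono hε hpos hmb h1 hmb.2⟩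
        · have hmb : min b 1 ∈ Icc (0:ℝ) 1 := by
            constructor
            · rcases min_cases b 1 with ⟨h, _⟩ | ⟨h, _⟩
              · rw [h]; exact le_trans (hψ' a ha).1.1 hb.le
              · rw [h]; norm_num
            · exact min_le_right _ _
          rw [hψ _ hmb]
          constructor
          · exact lt_min hb hψa1
          · exact min_le_left _ _
      exact hcw.mono inter_subset_right
  have := left.union right
  rwa [← inter_union_distrib_left, Iic_union_Ici, inter_univ] at this

end Aux

/-- Integral estimate along the second characteristic (Lemma A.3, case i = 2):
with `z = φ₃⁻¹(φ₁(x) + φ₂(ξ))` and `s₂^F = φ₁(x) − φ₁(z)`,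
`∫₀^{s₂^F} [φ₁⁻¹(φ₁(z) + s)]ⁿ ds ≤ K_ε xⁿ⁺¹/(n+1)` where
`K_ε = max_{[0,1]} max(1/ε₁, 1/ε₂)`.  `ψ₁, ψ₂, ψ₃` are the inverses of
`φ₁, φ₂, φ₃ = φ₁ + φ₂`. -/
theorem characteristic_integral_estimate_case2
    (ε₁ ε₂ : ℝ → ℝ)
    (hε₁ : ContinuousOn ε₁ (Icc 0 1)) (hε₂ : ContinuousOn ε₂ (Icc 0 1))
    (hε₁pos : ∀ x ∈ Icc (0:ℝ) 1, 0 < ε₁ x) (hε₂pos : ∀ x ∈ Icc (0:ℝ) 1, 0 < ε₂ x)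
    (ψ₁ ψ₂ ψ₃ : ℝ → ℝ)
    (hψ₁ : ∀ x ∈ Icc (0:ℝ) 1, ψ₁ (phiInt ε₁ x) = x)
    (hψ₁' : ∀ s ∈ Icc (0:ℝ) (phiInt ε₁ 1), ψ₁ s ∈ Icc (0:ℝ) 1 ∧ phiInt ε₁ (ψ₁ s) = s)
    (hψ₂ : ∀ x ∈ Icc (0:ℝ) 1, ψ₂ (phiInt ε₂ x) = x)
    (hψ₂' : ∀ s ∈ Icc (0:ℝ) (phiInt ε₂ 1), ψ₂ s ∈ Icc (0:ℝ) 1 ∧ phiInt ε₂ (ψ₂ s) = s)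
    (hψ₃ : ∀ x ∈ Icc (0:ℝ) 1, ψ₃ (phiInt ε₁ x + phiInt ε₂ x) = x)
    (hψ₃' : ∀ s ∈ Icc (0:ℝ) (phiInt ε₁ 1 + phiInt ε₂ 1),
      ψ₃ s ∈ Icc (0:ℝ) 1 ∧ phiInt ε₁ (ψ₃ s) + phiInt ε₂ (ψ₃ s) = s) :
    ∀ n : ℕ, 1 ≤ n → ∀ x ξ : ℝ, 0 ≤ ξ → ξ ≤ x → x ≤ 1 →
      (∫ s in (0:ℝ)..(phiInt ε₁ x - phiInt ε₁ (ψ₃ (phiInt ε₁ x + phiInt ε₂ ξ))),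
          (ψ₁ (phiInt ε₁ (ψ₃ (phiInt ε₁ x + phiInt ε₂ ξ)) + s)) ^ n) ≤
        (⨆ y : Icc (0:ℝ) 1, max (1 / ε₁ y) (1 / ε₂ y)) * x ^ (n + 1) / (n + 1) := by
  intro n hn x ξ hξ0 hξx hx1
  have h0 : (0:ℝ) ∈ Icc (0:ℝ) 1 := by constructor <;> norm_num
  have h1 : (1:ℝ) ∈ Icc (0:ℝ) 1 := by constructor <;> norm_num
  have hxm : x ∈ Icc (0:ℝ) 1 := ⟨le_trans hξ0 hξx, hx1⟩
  have hξm : ξ ∈ Icc (0:ℝ) 1 := ⟨hξ0, le_trans hξx hx1⟩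
  set K := (⨆ y : Icc (0:ℝ) 1, max (1 / ε₁ y) (1 / ε₂ y)) with hK
  -- K is an upper bound for 1/ε₁ on Icc 0 1
  have hFcont : Continuous (fun y : Icc (0:ℝ) 1 => max (1 / ε₁ y) (1 / ε₂ y)) := by
    have c1 : Continuous (fun y : Icc (0:ℝ) 1 => 1 / ε₁ y) :=
      (contOn_inv hε₁ hε₁pos).restrict
    have c2 : Continuous (fun y : Icc (0:ℝ) 1 => 1 / ε₂ y) :=
      (contOn_inv hε₂ hε₂pos).restrict
    exact c1.max c2
  have hbdd : BddAbove (range (fun y : Icc (0:ℝ) 1 => max (1 / ε₁ y) (1 / ε₂ y))) :=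
    (isCompact_range hFcont).bddAbove
  have hKbound : ∀ y ∈ Icc (0:ℝ) 1, 1 / ε₁ y ≤ K := by
    intro y hy
    calc 1 / ε₁ y ≤ max (1 / ε₁ y) (1 / ε₂ y) := le_max_left _ _
    _ ≤ K := le_ciSup hbdd ⟨y, hy⟩
  have hK0 : 0 ≤ K := by
    have := hKbound 0 h0
    have h2 : (0:ℝ) ≤ 1 / ε₁ 0 := one_div_nonneg.2 (hε₁pos 0 h0).le
    linarith
  -- the point z
  set σ := phiInt ε₁ x + phiInt ε₂ ξ with hσ
  have hσm : σ ∈ Icc (0:ℝ) (phiInt ε₁ 1 + phiInt ε₂ 1) := by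
    constructor
    · have := phiInt_nonneg hε₁ hε₁pos hxm
      have := phiInt_nonneg hε₂ hε₂pos hξm
      linarith
    · have := phiInt_mono hε₁ hε₁pos hxm h1 hx1
      have := phiInt_mono hε₂ hε₂pos hξm h1 hξm.2
      linarith
  obtain ⟨hzm, hzval⟩ := hψ₃' σ hσm
  set z := ψ₃ σ with hz
  have hzx : z ≤ x := by
    by_contra hc
    push_neg at hc
    have h1' : phiInt ε₁ x < phiInt ε₁ z := phiInt_strictMono hε₁ hε₁pos hxm hzm hc
    have h2' : phiInt ε₂ ξ ≤ phiInt ε₂ z :=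
      phiInt_mono hε₂ hε₂pos hξm hzm (le_of_lt (lt_of_le_of_lt hξx hc))
    rw [hσ] at hzval
    linarith
  set a := phiInt ε₁ z with ha
  set b := phiInt ε₁ x with hb
  have hab : a ≤ b := phiInt_mono hε₁ hε₁pos hzm hxm hzx
  have ha0 : 0 ≤ a := phiInt_nonneg hε₁ hε₁pos hzm
  have hbB : b ≤ phiInt ε₁ 1 := phiInt_mono hε₁ hε₁pos hxm h1 hx1
  -- continuity of ψ₁^n on [a,b]
  have hψ₁cont : ContinuousOn (fun t => ψ₁ t ^ n) (Icc a b) := by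
    apply ((psi_contOn hε₁ hε₁pos hψ₁ hψ₁').mono ?_).pow
    exact Icc_subset_Icc ha0 hbB
  -- Step 1: translation
  have step1 : (∫ s in (0:ℝ)..(b - a), (ψ₁ (a + s)) ^ n) = ∫ t in a..b, ψ₁ t ^ n := by
    have := intervalIntegral.integral_comp_add_left (a := (0:ℝ)) (b := b - a)
      (f := fun t => ψ₁ t ^ n) a
    rw [this]
    norm_num
  -- Step 2: change of variables
  have hzx01 : uIcc z x ⊆ Icc (0:ℝ) 1 := by
    rw [uIcc_of_le hzx]
    exact Icc_subset_Icc hzm.1 hx1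
  have step2 : (∫ u in z..x, (1 / ε₁ u) • ((fun t => ψ₁ t ^ n) ∘ (phiInt ε₁)) u)
      = ∫ t in a..b, ψ₁ t ^ n := by
    apply intervalIntegral.integral_comp_smul_deriv''
    · exact (phiInt_contOn hε₁ hε₁pos).mono hzx01
    · intro u hu
      rw [min_eq_left hzx, max_eq_right hzx] at hu
      have hu01 : u ∈ Ioo (0:ℝ) 1 := ⟨lt_of_le_of_lt hzm.1 hu.1, lt_of_lt_of_le hu.2 hx1⟩
      have hum : u ∈ Icc (0:ℝ) 1 := ⟨hu01.1.le, hu01.2.le⟩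
      have hca : ContinuousAt (fun w => 1 / ε₁ w) u :=
        (contOn_inv hε₁ hε₁pos).continuousAt (Icc_mem_nhds hu01.1 hu01.2)
      have hmeas : StronglyMeasurableAtFilter (fun w => 1 / ε₁ w) (nhds u) volume := by
        refine ⟨Ioo 0 1, Ioo_mem_nhds hu01.1 hu01.2, ?_⟩
        exact ((contOn_inv hε₁ hε₁pos).mono Ioo_subset_Icc_self).aestronglyMeasurable
          measurableSet_Ioo
      exact (intervalIntegral.integral_hasDerivAt_right
        (intble_inv hε₁ hε₁pos h0 hum) hmeas hca).hasDerivWithinAt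
    · exact (contOn_inv hε₁ hε₁pos).mono hzx01
    · apply hψ₁cont.mono
      intro t ht
      obtain ⟨u, hu, rfl⟩ := ht
      have hum : u ∈ Icc (0:ℝ) 1 := hzx01 hu
      rw [uIcc_of_le hzx] at hu
      exact ⟨phiInt_mono hε₁ hε₁pos hzm hum hu.1, phiInt_mono hε₁ hε₁pos hum hxm hu.2⟩
  -- simplify lhs of step2
  have step2' : (∫ u in z..x, (1 / ε₁ u) • ((fun t => ψ₁ t ^ n) ∘ (phiInt ε₁)) u)
      = ∫ u in z..x, (1 / ε₁ u) * u ^ n := by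
    apply intervalIntegral.integral_congr
    intro u hu
    have hum : u ∈ Icc (0:ℝ) 1 := hzx01 hu
    simp only [Function.comp, smul_eq_mul, hψ₁ u hum]
  -- Step 3: domination
  have hint1 : IntervalIntegrable (fun u => (1 / ε₁ u) * u ^ n) volume z x := by
    apply ContinuousOn.intervalIntegrable
    exact (((contOn_inv hε₁ hε₁pos).mono hzx01).mul ((continuous_pow n).continuousOn))
  have hint2 : IntervalIntegrable (fun u => K * u ^ n) volume z x :=
    (continuous_const.mul (continuous_pow n)).intervalIntegrable _ _
  have step3 : (∫ u in z..x, (1 / ε₁ u) * u ^ n) ≤ ∫ u in z..x, K * u ^ n := by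
    apply intervalIntegral.integral_mono_on hzx hint1 hint2
    intro u hu
    have hum : u ∈ Icc (0:ℝ) 1 := ⟨le_trans hzm.1 hu.1, le_trans hu.2 hx1⟩
    have hu0 : (0:ℝ) ≤ u ^ n := pow_nonneg hum.1 n
    exact mul_le_mul_of_nonneg_right (hKbound u hum) hu0
  -- Step 4: compute
  have step4 : (∫ u in z..x, K * u ^ n) = K * ((x ^ (n+1) - z ^ (n+1)) / (n+1)) := by
    rw [intervalIntegral.integral_const_mul, integral_pow]
  have step5 : K * ((x ^ (n+1) - z ^ (n+1)) / (n+1)) ≤ K * x ^ (n+1) / (n+1) := by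
    rw [mul_div_assoc]
    apply mul_le_mul_of_nonneg_left _ hK0
    apply div_le_div_of_nonneg_right _ (by positivity)
    · have : (0:ℝ) ≤ z ^ (n+1) := pow_nonneg hzm.1 _
      linarith
  calc (∫ s in (0:ℝ)..(b - a), (ψ₁ (a + s)) ^ n)
      = ∫ t in a..b, ψ₁ t ^ n := step1
    _ = ∫ u in z..x, (1 / ε₁ u) * u ^ n := by rw [← step2, step2']
    _ ≤ ∫ u in z..x, K * u ^ n := step3
    _ = K * ((x ^ (n+1) - z ^ (n+1)) / (n+1)) := step4
    _ ≤ K * x ^ (n+1) / (n+1) := step5
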